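/- Fix a cutoff strategy: given any acceptance rule (α(h), α(l)) for a binary test t with π_t increasing and π_t(0) ∈ (0,1), there exists a cutoff rule α* (i.e., α*(l) > 0 implies α*(h) = 1, and α*(h) < 1 implies α*(l) = 0) such that type 0 has the same acceptance probability under α and α*, every type θ < 0 has weakly higher acceptance probability under α than α*, and every type θ > 0 has weakly lower acceptance probability under α than α*. -/
import Mathlib


open Set

/-- Every acceptance rule can be replaced by a cutoff rule that gives type `0` the same
acceptance probability, weakly lowers the acceptance probability of negative types, and
weakly raises that of positive types. -/
theorem stmt_14 (lo hi : ℝ) (hlo : lo < 0) (hhi : 0 < hi) (πt : ℝ → ℝ)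
    (hmono : ∀ θ ∈ Icc lo hi, ∀ θ' ∈ Icc lo hi, θ ≤ θ' → πt θ ≤ πt θ')
    (hr : ∀ θ ∈ Icc lo hi, πt θ ∈ Icc (0:ℝ) 1)
    (h0 : πt 0 ∈ Ioo (0:ℝ) 1)
    (αh αl : ℝ) (hαh : αh ∈ Icc (0:ℝ) 1) (hαl : αl ∈ Icc (0:ℝ) 1) :
    ∃ βh βl : ℝ, βh ∈ Icc (0:ℝ) 1 ∧ βl ∈ Icc (0:ℝ) 1 ∧
      (0 < βl → βh = 1) ∧ (βh < 1 → βl = 0) ∧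
      αh * πt 0 + αl * (1 - πt 0) = βh * πt 0 + βl * (1 - πt 0) ∧
      (∀ θ ∈ Icc lo hi, θ < 0 →
        βh * πt θ + βl * (1 - πt θ) ≤ αh * πt θ + αl * (1 - πt θ)) ∧
      (∀ θ ∈ Icc lo hi, 0 < θ →
        αh * πt θ + αl * (1 - πt θ) ≤ βh * πt θ + βl * (1 - πt θ)) := by
  obtain ⟨h0l, h0r⟩ := h0
  obtain ⟨hαh0, hαh1⟩ := hαh
  obtain ⟨hαl0, hαl1⟩ := hαl
  have h0mem : (0:ℝ) ∈ Icc lo hi := ⟨hlo.le, hhi.le⟩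
  set π0 := πt 0 with hπ0
  set p := αh * π0 + αl * (1 - π0) with hp
  have hp0 : 0 ≤ p := by nlinarith
  have hp1 : p ≤ 1 := by nlinarith
  by_cases hc : p ≤ π0
  · have hcc : p / π0 * π0 = p := div_mul_cancel₀ p (ne_of_gt h0l)
    refine ⟨p / π0, 0, ⟨by positivity, div_le_one_of_le₀ hc h0l.le⟩,
      ⟨le_refl 0, zero_le_one⟩, fun h => absurd h (lt_irrefl 0), fun _ => rfl, ?_, ?_, ?_⟩
    · rw [zero_mul, add_zero, hcc]
    · intro θ hθ hθ0
      obtain ⟨hπl, hπr⟩ := hr θ hθ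
      have hle : πt θ ≤ π0 := hmono θ hθ 0 h0mem hθ0.le
      nlinarith [mul_nonneg hαl0 (sub_nonneg.2 hle), hcc, h0l,
        mul_le_mul_of_nonneg_right hle (div_nonneg hp0 h0l.le)]
    · intro θ hθ hθ0
      obtain ⟨hπl, hπr⟩ := hr θ hθ
      have hle : π0 ≤ πt θ := hmono 0 h0mem θ hθ hθ0.le
      nlinarith [mul_nonneg hαl0 (sub_nonneg.2 hle), hcc, h0l,
        mul_le_mul_of_nonneg_right hle (div_nonneg hp0 h0l.le)]
  · push_neg at hc
    have h1 : (0:ℝ) < 1 - π0 := by linarith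
    have hcc : (p - π0) / (1 - π0) * (1 - π0) = p - π0 :=
      div_mul_cancel₀ _ (ne_of_gt h1)
    refine ⟨1, (p - π0) / (1 - π0), ⟨zero_le_one, le_refl 1⟩,
      ⟨div_nonneg (by linarith) h1.le, div_le_one_of_le₀ (by linarith) h1.le⟩,
      fun _ => rfl, fun h => absurd h (lt_irrefl 1), ?_, ?_, ?_⟩
    · rw [one_mul, hcc]; ring
    · intro θ hθ hθ0
      obtain ⟨hπl, hπr⟩ := hr θ hθ
      have hle : πt θ ≤ π0 := hmono θ hθ 0 h0mem hθ0.le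
      nlinarith [mul_nonneg (sub_nonneg.2 hαh1) (sub_nonneg.2 hle), hcc, h1,
        mul_le_mul_of_nonneg_right (sub_le_sub_left hle 1)
          (div_nonneg (by linarith : (0:ℝ) ≤ p - π0) h1.le)]
    · intro θ hθ hθ0
      obtain ⟨hπl, hπr⟩ := hr θ hθ
      have hle : π0 ≤ πt θ := hmono 0 h0mem θ hθ hθ0.le
      nlinarith [mul_nonneg (sub_nonneg.2 hαh1) (sub_nonneg.2 hle), hcc, h1,
        mul_le_mul_of_nonneg_right (sub_le_sub_left hle 1)
          (div_nonneg (by linarith : (0:ℝ) ≤ p - π0) h1.le)]
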